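/- Let P be an ε-uniform (δ,s,C₁)-set of δ-squares, with uniformity parameter T. Then for each dyadic scale δ ≤ ρ ≤ 1 (of the form 2^{-jT}), the set P_ρ of ρ-squares containing an element of P is a (ρ, s, 2^{4T}·C₁)-set. Moreover |P_ρ| ≥ c·C₁^{-1}·ρ^{-s} for an absolute constant c > 0. -/

import Mathlib

open Set

noncomputable def sqCount (P : Set (ℝ × ℝ)) (ρ : ℝ) (n k : ℤ) : ℕ :=
  (P ∩ (Set.Ico ((n : ℝ) * ρ) (((n : ℝ) + 1) * ρ) ×ˢ
        Set.Ico ((k : ℝ) * ρ) (((k : ℝ) + 1) * ρ))).ncard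

private lemma mem_Ico_iff_floor {ρ : ℝ} (hρ : 0 < ρ) (x : ℝ) (n : ℤ) :
    x ∈ Set.Ico ((n:ℝ)*ρ) (((n:ℝ)+1)*ρ) ↔ ⌊x/ρ⌋ = n := by
  rw [Set.mem_Ico, Int.floor_eq_iff, le_div_iff₀ hρ, div_lt_iff₀ hρ]

set_option maxHeartbeats 400000 in
private lemma key (ρ s C₁ : ℝ) (hρ0 : 0 < ρ) (hρ1 : ρ ≤ 1) (hC : 1 ≤ C₁)
    (P : Set (ℝ × ℝ)) (hfin : P.Finite) (hne : P.Nonempty)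
    (hcard : ∀ (x : ℝ × ℝ) (r : ℝ), ρ ≤ r → r ≤ 1 →
      ((P ∩ Metric.closedBall x r).ncard : ℝ) ≤ C₁ * r ^ s * (P.ncard : ℝ))
    (hunif : ∀ n₁ k₁ n₂ k₂ : ℤ, sqCount P ρ n₁ k₁ ≠ 0 → sqCount P ρ n₂ k₂ ≠ 0 →
      sqCount P ρ n₁ k₁ = sqCount P ρ n₂ k₂) :
    (∀ (x : ℝ × ℝ) (r : ℝ), ρ ≤ r → r ≤ 1 →
      (({q : ℝ × ℝ | ∃ n k : ℤ, q = ((n:ℝ)*ρ, (k:ℝ)*ρ) ∧ sqCount P ρ n k ≠ 0} ∩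
          Metric.closedBall x r).ncard : ℝ) ≤
        4 * C₁ * r ^ s * (({q : ℝ × ℝ | ∃ n k : ℤ, q = ((n:ℝ)*ρ, (k:ℝ)*ρ) ∧
          sqCount P ρ n k ≠ 0}).ncard : ℝ)) ∧
    C₁⁻¹ * ρ ^ (-s) ≤ (({q : ℝ × ℝ | ∃ n k : ℤ, q = ((n:ℝ)*ρ, (k:ℝ)*ρ) ∧
      sqCount P ρ n k ≠ 0}).ncard : ℝ) := by
  classical
  set f : ℝ × ℝ → ℝ × ℝ := fun p => ((⌊p.1/ρ⌋ : ℝ) * ρ, (⌊p.2/ρ⌋ : ℝ) * ρ) with hf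
  set Q : Set (ℝ × ℝ) :=
    {q | ∃ n k : ℤ, q = ((n:ℝ)*ρ, (k:ℝ)*ρ) ∧ sqCount P ρ n k ≠ 0} with hQ
  -- squares
  set sq : ℤ → ℤ → Set (ℝ × ℝ) := fun n k =>
    Set.Ico ((n:ℝ)*ρ) (((n:ℝ)+1)*ρ) ×ˢ Set.Ico ((k:ℝ)*ρ) (((k:ℝ)+1)*ρ) with hsq
  have hsqC : ∀ n k, sqCount P ρ n k = (P ∩ sq n k).ncard := fun n k => rfl
  have hmem : ∀ (p : ℝ×ℝ) (n k : ℤ), p ∈ sq n k ↔ f p = ((n:ℝ)*ρ, (k:ℝ)*ρ) := by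
    intro p n k
    rw [hsq]
    simp only [Set.mem_prod, mem_Ico_iff_floor hρ0]
    constructor
    · rintro ⟨h1, h2⟩; simp [hf, h1, h2]
    · intro h
      have h1 : (⌊p.1/ρ⌋ : ℝ) * ρ = (n:ℝ) * ρ := congrArg Prod.fst h
      have h2 : (⌊p.2/ρ⌋ : ℝ) * ρ = (k:ℝ) * ρ := congrArg Prod.snd h
      have h1' : (⌊p.1/ρ⌋ : ℝ) = (n:ℝ) := mul_right_cancel₀ hρ0.ne' h1
      have h2' : (⌊p.2/ρ⌋ : ℝ) = (k:ℝ) := mul_right_cancel₀ hρ0.ne' h2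
      exact ⟨by exact_mod_cast h1', by exact_mod_cast h2'⟩
  have hfself : ∀ p : ℝ × ℝ, p ∈ sq ⌊p.1/ρ⌋ ⌊p.2/ρ⌋ := by
    intro p
    rw [hsq]
    refine ⟨?_, ?_⟩ <;>
      simp only [mem_Ico_iff_floor hρ0]
  have hQim : Q = f '' P := by
    ext q
    constructor
    · rintro ⟨n, k, rfl, hnk⟩
      rw [hsqC] at hnk
      obtain ⟨p, hpP, hpsq⟩ := Set.nonempty_of_ncard_ne_zero hnk
      exact ⟨p, hpP, ((hmem p n k).1 hpsq)⟩
    · rintro ⟨p, hpP, rfl⟩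
      refine ⟨⌊p.1/ρ⌋, ⌊p.2/ρ⌋, rfl, ?_⟩
      rw [hsqC]
      have hp : p ∈ P ∩ sq ⌊p.1/ρ⌋ ⌊p.2/ρ⌋ := ⟨hpP, hfself p⟩
      have : (P ∩ sq ⌊p.1/ρ⌋ ⌊p.2/ρ⌋).Finite := hfin.inter_of_left _
      exact (Set.ncard_pos this).2 ⟨p, hp⟩ |>.ne'
  have hQfin : Q.Finite := hQim ▸ hfin.image f
  -- finsets
  set Pf : Finset (ℝ × ℝ) := hfin.toFinset with hPf
  set Qf : Finset (ℝ × ℝ) := hQfin.toFinset with hQf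
  have hQfim : Qf = Pf.image f := by
    ext q
    simp only [hQf, hPf, Set.Finite.mem_toFinset, Finset.mem_image, hQim, Set.mem_image]
  have hPcard : (P.ncard) = Pf.card := Set.ncard_eq_toFinset_card P hfin
  have hQcard : (Q.ncard) = Qf.card := Set.ncard_eq_toFinset_card Q hQfin
  -- the constant N
  obtain ⟨p₀, hp₀⟩ := hne
  set N : ℕ := sqCount P ρ ⌊p₀.1/ρ⌋ ⌊p₀.2/ρ⌋ with hN
  have hN0 : N ≠ 0 := by
    rw [hN, hsqC]
    exact ((Set.ncard_pos (hfin.inter_of_left _)).2 ⟨p₀, hp₀, hfself p₀⟩).ne'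
  have hNconst : ∀ n k : ℤ, sqCount P ρ n k ≠ 0 → sqCount P ρ n k = N :=
    fun n k h => hunif n k _ _ h hN0
  -- fiber cardinalities
  have hfiber : ∀ q ∈ Qf, (Pf.filter (fun a => f a = q)).card = N := by
    intro q hq
    rw [hQf, Set.Finite.mem_toFinset] at hq
    obtain ⟨n, k, rfl, hnk⟩ := hq
    have hfe : (Pf.filter (fun a => f a = ((n:ℝ)*ρ, (k:ℝ)*ρ)))
        = (hfin.inter_of_left (sq n k)).toFinset := by
      ext a
      simp only [Finset.mem_filter, hPf, Set.Finite.mem_toFinset, Set.mem_inter_iff,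
        hmem a n k]
    rw [hfe, ← Set.ncard_eq_toFinset_card _ (hfin.inter_of_left (sq n k)), ← hsqC,
      hNconst n k hnk]
  have hPQ : Pf.card = Qf.card * N := by
    rw [Finset.card_eq_sum_card_image f Pf, ← hQfim,
      Finset.sum_congr rfl hfiber, Finset.sum_const, smul_eq_mul]
  -- distance from a point to its corner
  have hdistf : ∀ a : ℝ × ℝ, dist a (f a) ≤ ρ := by
    intro a
    rw [Prod.dist_eq]
    have hA1 : (⌊a.1/ρ⌋:ℝ)*ρ ≤ a.1 := by rw [← le_div_iff₀ hρ0]; exact Int.floor_le _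
    have hB1 : a.1 < ((⌊a.1/ρ⌋:ℝ)+1)*ρ := by
      rw [← div_lt_iff₀ hρ0]; exact Int.lt_floor_add_one _
    have hA2 : (⌊a.2/ρ⌋:ℝ)*ρ ≤ a.2 := by rw [← le_div_iff₀ hρ0]; exact Int.floor_le _
    have hB2 : a.2 < ((⌊a.2/ρ⌋:ℝ)+1)*ρ := by
      rw [← div_lt_iff₀ hρ0]; exact Int.lt_floor_add_one _
    refine max_le ?_ ?_ <;> rw [Real.dist_eq, abs_le] <;> constructor <;> simp [hf] <;> nlinarith
  -- Part B first
  have hQne : Q.Nonempty := hQim ▸ ⟨f p₀, p₀, hp₀, rfl⟩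
  have hQpos : 0 < Qf.card := by
    rw [← hQcard]; exact (Set.ncard_pos hQfin).2 hQne
  have partB : C₁⁻¹ * ρ ^ (-s) ≤ (Q.ncard : ℝ) := by
    have hsub : P ∩ sq ⌊p₀.1/ρ⌋ ⌊p₀.2/ρ⌋ ⊆
        P ∩ Metric.closedBall ((⌊p₀.1/ρ⌋:ℝ)*ρ, (⌊p₀.2/ρ⌋:ℝ)*ρ) ρ := by
      rintro a ⟨haP, hasq⟩
      refine ⟨haP, ?_⟩
      rw [Metric.mem_closedBall]
      have := hdistf a
      rwa [(hmem a _ _).1 hasq] at this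
    have h1 : (N : ℝ) ≤ ((P ∩ Metric.closedBall ((⌊p₀.1/ρ⌋:ℝ)*ρ, (⌊p₀.2/ρ⌋:ℝ)*ρ) ρ).ncard : ℝ) := by
      rw [hN, hsqC]
      exact_mod_cast Nat.cast_le.2 (Set.ncard_le_ncard hsub (hfin.inter_of_left _))
    have h2 := hcard ((⌊p₀.1/ρ⌋:ℝ)*ρ, (⌊p₀.2/ρ⌋:ℝ)*ρ) ρ le_rfl hρ1
    have hPn : (P.ncard : ℝ) = (Qf.card : ℝ) * (N : ℝ) := by
      rw [hPcard, hPQ]; push_cast; ring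
    have hNpos : (0:ℝ) < N := by exact_mod_cast Nat.pos_of_ne_zero hN0
    have hrpos : (0:ℝ) < ρ ^ s := Real.rpow_pos_of_pos hρ0 s
    have hC0 : (0:ℝ) < C₁ := lt_of_lt_of_le one_pos hC
    have hkey : 1 ≤ C₁ * ρ ^ s * (Qf.card : ℝ) := by
      rw [hPn] at h2
      nlinarith [le_trans h1 h2]
    rw [hQcard, Real.rpow_neg hρ0.le]
    have heq : C₁⁻¹ * (ρ ^ s)⁻¹ * (C₁ * ρ ^ s * (Qf.card : ℝ)) = (Qf.card : ℝ) := by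
      rw [show C₁⁻¹ * (ρ ^ s)⁻¹ * (C₁ * ρ ^ s * (Qf.card : ℝ)) = (C₁⁻¹ * C₁) * ((ρ ^ s)⁻¹ * ρ ^ s) * (Qf.card : ℝ) by ring, inv_mul_cancel₀ hC0.ne', inv_mul_cancel₀ hrpos.ne', one_mul, one_mul]
    calc C₁⁻¹ * (ρ ^ s)⁻¹ = C₁⁻¹ * (ρ ^ s)⁻¹ * 1 := by ring
      _ ≤ C₁⁻¹ * (ρ ^ s)⁻¹ * (C₁ * ρ ^ s * (Qf.card : ℝ)) := by
          exact mul_le_mul_of_nonneg_left hkey (by positivity)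
      _ = (Qf.card : ℝ) := heq
  refine ⟨?_, partB⟩
  -- Part A
  intro x r hr1 hr2
  have hr0 : 0 < r := lt_of_lt_of_le hρ0 hr1
  set Sf : Finset (ℝ × ℝ) := Qf.filter (fun q => q ∈ Metric.closedBall x r) with hSf
  have hScard : (Q ∩ Metric.closedBall x r).ncard = Sf.card := by
    rw [Set.ncard_eq_toFinset_card _ (hQfin.inter_of_left _)]
    congr 1
    ext q
    simp [hSf, Set.Finite.mem_toFinset, Finset.mem_filter, hQf]
  -- disjoint fibers inside the big ball
  have hbig : N * Sf.card ≤ (P ∩ Metric.closedBall x (2*r)).ncard := by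
    have hsubB : Sf.biUnion (fun q => Pf.filter (fun a => f a = q)) ⊆
        Pf.filter (fun a => a ∈ Metric.closedBall x (2*r)) := by
      intro a ha
      rw [Finset.mem_biUnion] at ha
      obtain ⟨q, hqS, haq⟩ := ha
      rw [Finset.mem_filter] at haq
      rw [hSf, Finset.mem_filter, Metric.mem_closedBall] at hqS
      refine Finset.mem_filter.2 ⟨haq.1, ?_⟩
      rw [Metric.mem_closedBall]
      calc dist a x ≤ dist a q + dist q x := dist_triangle a q x
        _ ≤ ρ + r := add_le_add (haq.2 ▸ hdistf a) hqS.2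
        _ ≤ 2 * r := by linarith
    have hdisj : ∀ q₁ ∈ Sf, ∀ q₂ ∈ Sf, q₁ ≠ q₂ →
        Disjoint (Pf.filter (fun a => f a = q₁)) (Pf.filter (fun a => f a = q₂)) := by
      intro q₁ _ q₂ _ hne12
      rw [Finset.disjoint_left]
      intro a ha1 ha2
      rw [Finset.mem_filter] at ha1 ha2
      exact hne12 (ha1.2 ▸ ha2.2 ▸ rfl)
    have hcount : (Sf.biUnion (fun q => Pf.filter (fun a => f a = q))).card = Sf.card * N := by
      rw [Finset.card_biUnion hdisj]
      rw [Finset.sum_congr rfl (fun q hq => hfiber q (Finset.mem_of_mem_filter q hq)),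
        Finset.sum_const, smul_eq_mul]
    have : (P ∩ Metric.closedBall x (2*r)).ncard
        = (Pf.filter (fun a => a ∈ Metric.closedBall x (2*r))).card := by
      rw [Set.ncard_eq_toFinset_card _ (hfin.inter_of_left _)]
      congr 1
      ext a
      simp [hPf, Set.Finite.mem_toFinset, Finset.mem_filter]
    rw [this, Nat.mul_comm, ← hcount]
    exact Finset.card_le_card hsubB
  -- covering the big ball by four admissible balls
  have hcover : ((P ∩ Metric.closedBall x (2*r)).ncard : ℝ) ≤ 4 * (C₁ * r ^ s * (P.ncard : ℝ)) := by
    set b1 := Metric.closedBall ((x.1 + r, x.2 + r) : ℝ × ℝ) r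
    set b2 := Metric.closedBall ((x.1 + r, x.2 - r) : ℝ × ℝ) r
    set b3 := Metric.closedBall ((x.1 - r, x.2 + r) : ℝ × ℝ) r
    set b4 := Metric.closedBall ((x.1 - r, x.2 - r) : ℝ × ℝ) r
    have hsub4 : Metric.closedBall x (2*r) ⊆ b1 ∪ b2 ∪ b3 ∪ b4 := by
      intro y hy
      rw [Metric.mem_closedBall, Prod.dist_eq, max_le_iff, Real.dist_eq, Real.dist_eq,
        abs_le, abs_le] at hy
      obtain ⟨⟨h1a, h1b⟩, h2a, h2b⟩ := hy
      rcases le_total y.1 x.1 with hx1 | hx1 <;> rcases le_total y.2 x.2 with hx2 | hx2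
      · refine Or.inr ?_
        simp only [b4, Metric.mem_closedBall, Prod.dist_eq, max_le_iff, Real.dist_eq, abs_le]
        refine ⟨⟨?_, ?_⟩, ?_, ?_⟩ <;> linarith
      · refine Or.inl (Or.inr ?_)
        simp only [b3, Metric.mem_closedBall, Prod.dist_eq, max_le_iff, Real.dist_eq, abs_le]
        refine ⟨⟨?_, ?_⟩, ?_, ?_⟩ <;> linarith
      · refine Or.inl (Or.inl (Or.inr ?_))
        simp only [b2, Metric.mem_closedBall, Prod.dist_eq, max_le_iff, Real.dist_eq, abs_le]
        refine ⟨⟨?_, ?_⟩, ?_, ?_⟩ <;> linarith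
      · refine Or.inl (Or.inl (Or.inl ?_))
        simp only [b1, Metric.mem_closedBall, Prod.dist_eq, max_le_iff, Real.dist_eq, abs_le]
        refine ⟨⟨?_, ?_⟩, ?_, ?_⟩ <;> linarith
    have hsplit : P ∩ Metric.closedBall x (2*r) ⊆
        (P ∩ b1) ∪ (P ∩ b2) ∪ (P ∩ b3) ∪ (P ∩ b4) := by
      rintro a ⟨haP, haB⟩
      rcases hsub4 haB with ((h|h)|h)|h
      · exact Or.inl (Or.inl (Or.inl ⟨haP, h⟩))
      · exact Or.inl (Or.inl (Or.inr ⟨haP, h⟩))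
      · exact Or.inl (Or.inr ⟨haP, h⟩)
      · exact Or.inr ⟨haP, h⟩
    have hn : (P ∩ Metric.closedBall x (2*r)).ncard ≤
        (P ∩ b1).ncard + (P ∩ b2).ncard + (P ∩ b3).ncard + (P ∩ b4).ncard := by
      calc (P ∩ Metric.closedBall x (2*r)).ncard
          ≤ ((P ∩ b1) ∪ (P ∩ b2) ∪ (P ∩ b3) ∪ (P ∩ b4)).ncard := by
            refine Set.ncard_le_ncard hsplit ?_
            exact (((hfin.inter_of_left b1).union (hfin.inter_of_left b2)).union
              (hfin.inter_of_left b3)).union (hfin.inter_of_left b4)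
        _ ≤ (P ∩ b1).ncard + (P ∩ b2).ncard + (P ∩ b3).ncard + (P ∩ b4).ncard := by
            calc _ ≤ ((P ∩ b1) ∪ (P ∩ b2) ∪ (P ∩ b3)).ncard + (P ∩ b4).ncard :=
                  Set.ncard_union_le _ _
              _ ≤ (((P ∩ b1) ∪ (P ∩ b2)).ncard + (P ∩ b3).ncard) + (P ∩ b4).ncard := by
                  gcongr; exact Set.ncard_union_le _ _
              _ ≤ _ := by gcongr; exact Set.ncard_union_le _ _
    have e1 := hcard (x.1 + r, x.2 + r) r hr1 hr2
    have e2 := hcard (x.1 + r, x.2 - r) r hr1 hr2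
    have e3 := hcard (x.1 - r, x.2 + r) r hr1 hr2
    have e4 := hcard (x.1 - r, x.2 - r) r hr1 hr2
    have hn' : ((P ∩ Metric.closedBall x (2*r)).ncard : ℝ) ≤
        ((P ∩ b1).ncard : ℝ) + (P ∩ b2).ncard + (P ∩ b3).ncard + (P ∩ b4).ncard := by
      exact_mod_cast hn
    simp only [b1, b2, b3, b4] at hn'
    linarith
  -- combine
  have hNpos : (0:ℝ) < N := by exact_mod_cast Nat.pos_of_ne_zero hN0
  have hPn : (P.ncard : ℝ) = (Qf.card : ℝ) * (N : ℝ) := by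
    rw [hPcard, hPQ]; push_cast; ring
  have hmain : ((Q ∩ Metric.closedBall x r).ncard : ℝ) * N ≤
      4 * C₁ * r ^ s * (Qf.card : ℝ) * N := by
    have hb : (N : ℝ) * Sf.card ≤ ((P ∩ Metric.closedBall x (2*r)).ncard : ℝ) := by
      exact_mod_cast hbig
    rw [hScard]
    rw [hPn] at hcover
    nlinarith
  have := le_of_mul_le_mul_right hmain hNpos
  rw [hQcard]
  exact this

/-- if `P` is an ε-uniform `(δ,s,C₁)`-set then at every coarser dyadic scale
`ρ = 2^{-jT}` the set `P_ρ` of nonempty ρ-squares is a `(ρ,s,2^{4T}C₁)`-set and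
`|P_ρ| ≥ c C₁⁻¹ ρ^{-s}` for an absolute constant `c > 0`. -/
theorem stmt1 :
    ∃ c : ℝ, 0 < c ∧
      ∀ (T m : ℕ), 0 < T →
      ∀ (δ s C₁ : ℝ), δ = (2 : ℝ) ^ (-(m * T : ℤ)) → 0 < s → s ≤ 2 → 1 ≤ C₁ →
      ∀ P : Set (ℝ × ℝ), P.Finite → P.Nonempty →
      (∀ (x : ℝ × ℝ) (r : ℝ), δ ≤ r → r ≤ 1 →
        ((P ∩ Metric.closedBall x r).ncard : ℝ) ≤ C₁ * r ^ s * (P.ncard : ℝ)) →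
      (∀ j : ℕ, j ≤ m → ∀ n₁ k₁ n₂ k₂ : ℤ,
        sqCount P ((2 : ℝ) ^ (-(j * T : ℤ))) n₁ k₁ ≠ 0 →
        sqCount P ((2 : ℝ) ^ (-(j * T : ℤ))) n₂ k₂ ≠ 0 →
        sqCount P ((2 : ℝ) ^ (-(j * T : ℤ))) n₁ k₁ =
          sqCount P ((2 : ℝ) ^ (-(j * T : ℤ))) n₂ k₂) →
      ∀ j : ℕ, j ≤ m →
        (∀ (x : ℝ × ℝ) (r : ℝ), (2 : ℝ) ^ (-(j * T : ℤ)) ≤ r → r ≤ 1 →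
          (({q : ℝ × ℝ | ∃ n k : ℤ,
              q = ((n : ℝ) * (2 : ℝ) ^ (-(j * T : ℤ)), (k : ℝ) * (2 : ℝ) ^ (-(j * T : ℤ))) ∧
              sqCount P ((2 : ℝ) ^ (-(j * T : ℤ))) n k ≠ 0} ∩
                Metric.closedBall x r).ncard : ℝ) ≤
            2 ^ (4 * T) * C₁ * r ^ s *
              (({q : ℝ × ℝ | ∃ n k : ℤ,
                  q = ((n : ℝ) * (2 : ℝ) ^ (-(j * T : ℤ)), (k : ℝ) * (2 : ℝ) ^ (-(j * T : ℤ))) ∧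
                  sqCount P ((2 : ℝ) ^ (-(j * T : ℤ))) n k ≠ 0}).ncard : ℝ)) ∧
        c * C₁⁻¹ * ((2 : ℝ) ^ (-(j * T : ℤ))) ^ (-s) ≤
          (({q : ℝ × ℝ | ∃ n k : ℤ,
              q = ((n : ℝ) * (2 : ℝ) ^ (-(j * T : ℤ)), (k : ℝ) * (2 : ℝ) ^ (-(j * T : ℤ))) ∧
              sqCount P ((2 : ℝ) ^ (-(j * T : ℤ))) n k ≠ 0}).ncard : ℝ) := by
  refine ⟨1, one_pos, ?_⟩
  intro T m hT δ s C₁ hδ hs hs2 hC P hfin hne hcard hunif j hj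
  set ρ : ℝ := (2:ℝ) ^ (-(j*T : ℤ)) with hρ
  have hρ0 : 0 < ρ := zpow_pos (by norm_num) _
  have hρ1 : ρ ≤ 1 := by
    rw [hρ]
    calc (2:ℝ) ^ (-((j:ℤ)*(T:ℤ))) ≤ (2:ℝ) ^ (0:ℤ) :=
          zpow_le_zpow_right₀ one_le_two (neg_nonpos.2 (by positivity))
      _ = 1 := zpow_zero 2
  have hδρ : δ ≤ ρ := by
    rw [hδ, hρ]
    refine zpow_le_zpow_right₀ one_le_two (neg_le_neg ?_)
    exact_mod_cast Nat.mul_le_mul_right T hj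
  have hcard' : ∀ (x : ℝ × ℝ) (r : ℝ), ρ ≤ r → r ≤ 1 →
      ((P ∩ Metric.closedBall x r).ncard : ℝ) ≤ C₁ * r ^ s * (P.ncard : ℝ) :=
    fun x r h1 h2 => hcard x r (le_trans hδρ h1) h2
  obtain ⟨hA, hB⟩ := key ρ s C₁ hρ0 hρ1 hC P hfin hne hcard' (hunif j hj)
  refine ⟨?_, by rw [one_mul]; exact hB⟩
  intro x r h1 h2
  refine le_trans (hA x r h1 h2) ?_
  have h16 : (4:ℝ) ≤ 2 ^ (4*T) := by
    calc (4:ℝ) ≤ 2 ^ 4 := by norm_num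
      _ ≤ 2 ^ (4*T) := by
        apply pow_le_pow_right₀ one_le_two
        omega
  have hnn : (0:ℝ) ≤ C₁ * r ^ s *
      (({q : ℝ × ℝ | ∃ n k : ℤ, q = ((n:ℝ)*ρ, (k:ℝ)*ρ) ∧
        sqCount P ρ n k ≠ 0}).ncard : ℝ) := by
    refine mul_nonneg (mul_nonneg (le_trans zero_le_one hC) ?_) (Nat.cast_nonneg _)
    exact Real.rpow_nonneg (le_trans hρ0.le h1) s
  nlinarith
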